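/- Let J be a graded ideal of the ring R = F₂[q,v]/(q³) (graded with deg q = 1 and deg v = 4) such that the localization of J away from v equals the localization of R away from v (equivalently, v^l ∈ J for some l ≥ 0). Then there exist natural numbers i ≥ j ≥ k ≥ 0 such that J is exactly the ideal of R generated by the three elements v^i, q·v^j and q²·v^k. -/
import Mathlib


/-!
STATEMENT 0: A graded ideal `J` of `R = F₂[q,v]/(q³)` (with `deg q = 1`, `deg v = 4`)
whose localization away from `v` is all of `v⁻¹R` (equivalently, `v^l ∈ J` for some `l`)
is of the form `(v^i, q v^j, q² v^k)` with `i ≥ j ≥ k ≥ 0`.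
-/

open MvPolynomial

noncomputable section

/-- The ideal `(q³)` in `F₂[q,v]`, where `q = X 0` and `v = X 1`. -/
def relIdeal : Ideal (MvPolynomial (Fin 2) (ZMod 2)) := Ideal.span {X 0 ^ 3}

/-- The ring `R = F₂[q,v]/(q³)`. -/
abbrev RR := MvPolynomial (Fin 2) (ZMod 2) ⧸ relIdeal

/-- The class of `q` in `R`. -/
def q : RR := Ideal.Quotient.mk relIdeal (X 0)

/-- The class of `v` in `R`. -/
def v : RR := Ideal.Quotient.mk relIdeal (X 1)

/-- The weights of the grading: `deg q = 1`, `deg v = 4`. -/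
def wt : Fin 2 → ℕ := ![1, 4]

/-- An element of `R` is homogeneous of degree `d` if it is the image of a
weighted-homogeneous polynomial of degree `d` (weights `deg q = 1`, `deg v = 4`). -/
def IsHomog (x : RR) (d : ℕ) : Prop :=
  ∃ p : MvPolynomial (Fin 2) (ZMod 2),
    p.IsWeightedHomogeneous wt d ∧ Ideal.Quotient.mk relIdeal p = x

lemma finsupp_decomp (μ : Fin 2 →₀ ℕ) : μ = Finsupp.single 0 (μ 0) + Finsupp.single 1 (μ 1) := by
  ext i; fin_cases i <;> simp [Finsupp.single_apply]

lemma weight_eq (μ : Fin 2 →₀ ℕ) : Finsupp.weight wt μ = μ 0 + 4 * μ 1 := by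
  rw [finsupp_decomp μ, map_add]
  simp [Finsupp.weight_apply, Finsupp.sum_single_index, wt]
  ring

lemma mk_monomial_big (μ : Fin 2 →₀ ℕ) (c : ZMod 2) (h : 3 ≤ μ 0) :
    Ideal.Quotient.mk relIdeal (monomial μ c) = 0 := by
  have hμ : μ = Finsupp.single 0 3 + (Finsupp.single 0 (μ 0 - 3) + Finsupp.single 1 (μ 1)) := by
    ext i; fin_cases i <;> simp [Finsupp.single_apply] <;> omega
  rw [Ideal.Quotient.eq_zero_iff_mem]
  have : (monomial μ c : MvPolynomial (Fin 2) (ZMod 2)) =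
      X 0 ^ 3 * monomial (Finsupp.single 0 (μ 0 - 3) + Finsupp.single 1 (μ 1)) c := by
    rw [X_pow_eq_monomial, monomial_mul, one_mul, ← hμ]
  rw [this]
  exact Ideal.mul_mem_right _ _ (Ideal.subset_span rfl)

lemma mk_monomial_small (a b : ℕ) :
    Ideal.Quotient.mk relIdeal (monomial (Finsupp.single 0 a + Finsupp.single 1 b)
      (1 : ZMod 2)) = q ^ a * v ^ b := by
  have : (monomial (Finsupp.single 0 a + Finsupp.single 1 b) (1 : ZMod 2)
      : MvPolynomial (Fin 2) (ZMod 2)) = X 0 ^ a * X 1 ^ b := by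
    rw [X_pow_eq_monomial, X_pow_eq_monomial, monomial_mul, one_mul]
  simp only [this, map_mul, map_pow]; rfl

lemma homog_classify {x : RR} {d : ℕ} (h : IsHomog x d) :
    x = 0 ∨ ∃ a b : ℕ, a ≤ 2 ∧ x = q ^ a * v ^ b := by
  obtain ⟨p, hp, rfl⟩ := h
  have hrep : (Ideal.Quotient.mk relIdeal) p
      = ∑ μ ∈ p.support, Ideal.Quotient.mk relIdeal (monomial μ (coeff μ p)) := by
    conv_lhs => rw [← p.support_sum_monomial_coeff]
    rw [map_sum]
  by_cases hd : d % 4 ≤ 2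
  · set μ₀ : Fin 2 →₀ ℕ := Finsupp.single 0 (d % 4) + Finsupp.single 1 (d / 4) with hμ₀
    have key : ∀ μ ∈ p.support, μ ≠ μ₀ →
        Ideal.Quotient.mk relIdeal (monomial μ (coeff μ p)) = 0 := by
      intro μ hμ hne
      by_cases h3 : 3 ≤ μ 0
      · exact mk_monomial_big μ _ h3
      · exfalso
        apply hne
        have hw : μ 0 + 4 * μ 1 = d := by rw [← weight_eq]; exact hp (mem_support_iff.mp hμ)
        have h0 : μ 0 = d % 4 := by omega
        have h1 : μ 1 = d / 4 := by omega
        rw [finsupp_decomp μ, h0, h1]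
    rw [hrep, Finset.sum_eq_single μ₀ key (by
      intro h
      rw [notMem_support_iff.mp h, monomial_zero, map_zero])]
    by_cases hc : coeff μ₀ p = 0
    · left; simp [hc]
    · right
      refine ⟨d % 4, d / 4, hd, ?_⟩
      have h2 : ∀ c : ZMod 2, c = 0 ∨ c = 1 := by decide
      have hc1 : coeff μ₀ p = 1 := (h2 _).resolve_left hc
      rw [hc1, mk_monomial_small]
  · left
    rw [hrep]
    apply Finset.sum_eq_zero
    intro μ hμ
    have hw : μ 0 + 4 * μ 1 = d := by rw [← weight_eq]; exact hp (mem_support_iff.mp hμ)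
    exact mk_monomial_big μ _ (by omega)

theorem graded_ideal_classification (J : Ideal RR)
    (hgraded : ∃ S : Set RR, (∀ x ∈ S, ∃ d : ℕ, IsHomog x d) ∧ J = Ideal.span S)
    (hloc : ∃ l : ℕ, v ^ l ∈ J) :
    ∃ i j k : ℕ, k ≤ j ∧ j ≤ i ∧
      J = Ideal.span {v ^ i, q * v ^ j, q ^ 2 * v ^ k} := by
  classical
  obtain ⟨S, hS, hJ⟩ := hgraded
  obtain ⟨l, hl⟩ := hloc
  have e0 : ∃ n, v ^ n ∈ J := ⟨l, hl⟩
  have e1 : ∃ n, q * v ^ n ∈ J := ⟨l, J.mul_mem_left q hl⟩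
  have e2 : ∃ n, q ^ 2 * v ^ n ∈ J := ⟨l, J.mul_mem_left (q ^ 2) hl⟩
  refine ⟨Nat.find e0, Nat.find e1, Nat.find e2, ?_, ?_, ?_⟩
  · refine Nat.find_min' e2 ?_
    have h := Nat.find_spec e1
    have : q ^ 2 * v ^ (Nat.find e1) = q * (q * v ^ (Nat.find e1)) := by ring
    rw [this]
    exact J.mul_mem_left q h
  · refine Nat.find_min' e1 ?_
    exact J.mul_mem_left q (Nat.find_spec e0)
  · apply le_antisymm
    · refine le_of_eq_of_le hJ ?_
      rw [Ideal.span_le]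
      intro x hx
      obtain ⟨d, hd⟩ := hS x hx
      have hxJ : x ∈ J := hJ ▸ Ideal.subset_span hx
      rcases homog_classify hd with rfl | ⟨a, b, ha, rfl⟩
      · exact Ideal.zero_mem _
      · interval_cases a
        · have hb : Nat.find e0 ≤ b := Nat.find_min' e0 (by simpa using hxJ)
          have : (q : RR) ^ 0 * v ^ b = v ^ (b - Nat.find e0) * v ^ (Nat.find e0) := by
            rw [pow_zero, one_mul, ← pow_add]
            congr 1
            omega
          rw [this]
          exact Ideal.mul_mem_left _ _ (Ideal.subset_span (Set.mem_insert _ _))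
        · have hb : Nat.find e1 ≤ b := Nat.find_min' e1 (by simpa using hxJ)
          have : (q : RR) ^ 1 * v ^ b = v ^ (b - Nat.find e1) * (q * v ^ (Nat.find e1)) := by
            rw [pow_one]
            rw [show v ^ (b - Nat.find e1) * (q * v ^ Nat.find e1)
              = q * (v ^ (b - Nat.find e1) * v ^ Nat.find e1) by ring, ← pow_add]
            congr 2
            omega
          rw [this]
          exact Ideal.mul_mem_left _ _ (Ideal.subset_span (Set.mem_insert_of_mem _ (Set.mem_insert _ _)))
        · have hb : Nat.find e2 ≤ b := Nat.find_min' e2 hxJ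
          have : (q : RR) ^ 2 * v ^ b = v ^ (b - Nat.find e2) * (q ^ 2 * v ^ (Nat.find e2)) := by
            rw [show v ^ (b - Nat.find e2) * (q ^ 2 * v ^ Nat.find e2)
              = q ^ 2 * (v ^ (b - Nat.find e2) * v ^ Nat.find e2) by ring, ← pow_add]
            congr 2
            omega
          rw [this]
          exact Ideal.mul_mem_left _ _ (Ideal.subset_span (Set.mem_insert_of_mem _ (Set.mem_insert_of_mem _ rfl)))
    · rw [Ideal.span_le]
      rintro x hx
      simp only [Set.mem_insert_iff, Set.mem_singleton_iff] at hx
      rcases hx with rfl | rfl | rfl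
      · exact Nat.find_spec e0
      · exact Nat.find_spec e1
      · exact Nat.find_spec e2

end
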